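/- arXiv:2601.00287 — 4 statements merged into one kernel-verified Lean document; each statement's English description precedes it below -/
import Mathlib

section
/- Let X be a random variable (covariate), Y a real random variable (potential outcome), and W a {0,1}-valued random variable (treatment-version indicator). Suppose Y is conditionally independent of W given X, and let p(X) = E[W | X]. Then Y is conditionally independent of W given p(X). -/
open MeasureTheory ProbabilityTheory

/-- Proposition 1 of the paper, balancing property of the
generalized propensity score: if `Y ⫫ W | X` and `pX = E[W | σ(X)]`, then
`Y ⫫ W | pX`. -/
theorem propensity_score_balancing
    {Ω : Type*} [mΩ : MeasurableSpace Ω] [StandardBorelSpace Ω] [Nonempty Ω]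
    {μ : Measure Ω} [IsProbabilityMeasure μ] {p : ℕ}
    (X : Ω → (Fin p → ℝ)) (Y W : Ω → ℝ)
    (hX : Measurable X) (hY : Measurable Y) (hW : Measurable W)
    (hWval : ∀ ω, W ω = 0 ∨ W ω = 1)
    (hCI : CondIndepFun (MeasurableSpace.comap X inferInstance) hX.comap_le Y W μ)
    (pX : Ω → ℝ)
    (hpX : pX = μ[W | MeasurableSpace.comap X inferInstance])
    (hpXmeas : Measurable pX) :
    CondIndepFun (MeasurableSpace.comap pX inferInstance) hpXmeas.comap_le Y W μ := by
  set B := W ⁻¹' {1} with hBdef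
  have hB : MeasurableSet[mΩ] B := hW (measurableSet_singleton 1)
  have hWind : B.indicator (fun _ => (1 : ℝ)) = W := by
    funext ω
    rcases hWval ω with h0 | h1
    · simp [Set.indicator_apply, hBdef, h0]
    · simp [Set.indicator_apply, hBdef, h1]
  have hind : ∀ s : Set Ω, MeasurableSet[mΩ] s →
      Integrable (s.indicator fun _ => (1 : ℝ)) μ :=
    fun s hs => (integrable_const 1).indicator hs
  have hWint : Integrable W μ := hWind ▸ hind B hB
  set mX := MeasurableSpace.comap X inferInstance with hmXdef
  set mP := MeasurableSpace.comap pX inferInstance with hmPdef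
  have hmX : mX ≤ mΩ := hX.comap_le
  have hmP : mP ≤ mΩ := hpXmeas.comap_le
  have hpX_mX : StronglyMeasurable[mX] pX := by
    rw [hpX]; exact stronglyMeasurable_condExp
  have hPX : mP ≤ mX := hpX_mX.measurable.comap_le
  have hpX_mP : StronglyMeasurable[mP] pX :=
    (Measurable.of_comap_le le_rfl).stronglyMeasurable
  have hpXint : Integrable pX μ := by rw [hpX]; exact integrable_condExp
  have hpX0 : 0 ≤ᵐ[μ] pX := by
    rw [hpX]
    exact condExp_nonneg (Filter.Eventually.of_forall fun ω => by
      rcases hWval ω with h | h <;> simp [h])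
  have hpX1 : pX ≤ᵐ[μ] fun _ => (1 : ℝ) := by
    rw [hpX]
    have h := condExp_mono (m := mX) hWint (integrable_const (1 : ℝ))
      (Filter.Eventually.of_forall fun ω => by rcases hWval ω with h | h <;> simp [h])
    rwa [condExp_const (μ := μ) hmX (1 : ℝ)] at h
  have hpXbdd : ∀ᵐ ω ∂μ, ‖pX ω‖ ≤ 1 := by
    filter_upwards [hpX0, hpX1] with ω h0 h1
    have h0' : (0 : ℝ) ≤ pX ω := h0
    rw [Real.norm_eq_abs, abs_le]
    exact ⟨by linarith, h1⟩
  -- conditional probability of B given mP is pX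
  have hBP : (μ⟦B | mP⟧) =ᵐ[μ] pX := by
    calc (μ⟦B | mP⟧) = μ[W | mP] := by rw [hWind]
      _ =ᵐ[μ] μ[μ[W | mX] | mP] := (condExp_condExp_of_le hPX hmX).symm
      _ = μ[pX | mP] := by rw [← hpX]
      _ = pX := condExp_of_stronglyMeasurable hmP hpX_mP hpXint
  rw [condIndepFun_iff_condExp_inter_preimage_eq_mul hY hW] at hCI ⊢
  -- the key computation
  have key : ∀ s : Set ℝ, MeasurableSet s →
      (μ⟦Y ⁻¹' s ∩ B | mP⟧) =ᵐ[μ]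
        fun ω => (μ⟦Y ⁻¹' s | mP⟧) ω * pX ω := by
    intro s hs
    set A := Y ⁻¹' s with hAdef
    have hAm : MeasurableSet[mΩ] A := hY hs
    have hBX : (μ⟦B | mX⟧) = pX := by
      rw [hpX, ← hWind]
    have h1 : (μ⟦A ∩ B | mX⟧) =ᵐ[μ] fun ω => pX ω * (μ⟦A | mX⟧) ω := by
      refine (hCI s {1} hs (measurableSet_singleton 1)).trans ?_
      rw [hBX]
      exact Filter.Eventually.of_forall fun ω => mul_comm _ _
    have h2 : (μ⟦A ∩ B | mP⟧) =ᵐ[μ] μ[fun ω => pX ω * (μ⟦A | mX⟧) ω | mP] :=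
      (condExp_condExp_of_le hPX hmX).symm.trans (condExp_congr_ae h1)
    have hgint : Integrable (μ⟦A | mX⟧) μ := integrable_condExp
    have hmulint : Integrable (fun ω => pX ω * (μ⟦A | mX⟧) ω) μ := by
      have := hgint.bdd_mul (c := 1) hpXmeas.aestronglyMeasurable hpXbdd
      exact this
    have h3 : μ[fun ω => pX ω * (μ⟦A | mX⟧) ω | mP]
        =ᵐ[μ] pX * μ[μ⟦A | mX⟧ | mP] :=
      condExp_mul_of_stronglyMeasurable_left hpX_mP hmulint hgint
    have h4 : μ[μ⟦A | mX⟧ | mP] =ᵐ[μ] (μ⟦A | mP⟧) :=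
      condExp_condExp_of_le hPX hmX
    filter_upwards [h2, h3, h4.mono fun ω h => h] with ω e2 e3 e4
    rw [e2, e3]
    simp only [Pi.mul_apply]
    rw [e4, mul_comm]
  -- main argument, by cases on which of 0, 1 belong to t
  intro s t hs ht
  set A := Y ⁻¹' s with hAdef
  have hAm : MeasurableSet[mΩ] A := hY hs
  by_cases h1t : (1 : ℝ) ∈ t <;> by_cases h0t : (0 : ℝ) ∈ t
  · -- both 0 and 1 in t : W ⁻¹' t = univ
    have hWt : W ⁻¹' t = Set.univ := by
      ext ω; simp only [Set.mem_preimage, Set.mem_univ, iff_true]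
      rcases hWval ω with h | h <;> rw [h] <;> assumption
    rw [hWt, Set.inter_univ]
    have huniv : (μ⟦(Set.univ : Set Ω) | mP⟧) = fun _ => (1 : ℝ) := by
      rw [Set.indicator_univ]; exact condExp_const (μ := μ) hmP (1 : ℝ)
    rw [huniv]
    exact Filter.Eventually.of_forall fun ω => by simp
  · -- only 1 in t : W ⁻¹' t = B
    have hWt : W ⁻¹' t = B := by
      ext ω; simp only [Set.mem_preimage, hBdef, Set.mem_singleton_iff]
      rcases hWval ω with h | h <;> rw [h] <;> simp_all
    rw [hWt]
    filter_upwards [key s hs, hBP] with ω e1 e2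
    rw [e1, e2]
  · -- only 0 in t : W ⁻¹' t = Bᶜ
    have hWt : W ⁻¹' t = Bᶜ := by
      ext ω; simp only [Set.mem_preimage, Set.mem_compl_iff, hBdef,
        Set.mem_singleton_iff]
      rcases hWval ω with h | h <;> rw [h] <;> simp_all
    rw [hWt]
    have hsub : (A ∩ Bᶜ).indicator (fun _ => (1 : ℝ))
        = A.indicator (fun _ => (1 : ℝ)) - (A ∩ B).indicator (fun _ => (1 : ℝ)) := by
      funext ω
      by_cases hωA : ω ∈ A <;> by_cases hωB : ω ∈ B <;>
        simp [Set.indicator_apply, hωA, hωB]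
    have hcomp : (Bᶜ).indicator (fun _ => (1 : ℝ))
        = (fun _ => (1 : ℝ)) - B.indicator (fun _ => (1 : ℝ)) := by
      funext ω
      by_cases hωB : ω ∈ B <;> simp [Set.indicator_apply, hωB]
    have e1 : (μ⟦A ∩ Bᶜ | mP⟧) =ᵐ[μ] (μ⟦A | mP⟧) - (μ⟦A ∩ B | mP⟧) := by
      rw [hsub]
      exact condExp_sub (hind A hAm) (hind _ (hAm.inter hB)) mP
    have e2 : (μ⟦Bᶜ | mP⟧) =ᵐ[μ] (fun _ => (1 : ℝ)) - (μ⟦B | mP⟧) := by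
      rw [hcomp]
      refine (condExp_sub (integrable_const 1) (hind B hB) mP).trans ?_
      rw [condExp_const (μ := μ) hmP (1 : ℝ)]
    filter_upwards [e1, e2, key s hs, hBP] with ω f1 f2 f3 f4
    rw [f1, f2]
    simp only [Pi.sub_apply]
    rw [f3, f4]
    ring
  · -- neither 0 nor 1 in t : W ⁻¹' t = ∅
    have hWt : W ⁻¹' t = ∅ := by
      ext ω; simp only [Set.mem_preimage, Set.mem_empty_iff_false, iff_false]
      rcases hWval ω with h | h <;> rw [h] <;> assumption
    rw [hWt, Set.inter_empty]
    have hempty : (μ⟦(∅ : Set Ω) | mP⟧) = 0 := by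
      rw [Set.indicator_empty]; exact condExp_zero
    rw [hempty]
    exact Filter.Eventually.of_forall fun ω => by simp
end

section
/- Under the assumptions of IPW identification, the mean potential outcome admits the responsibility-weighted representation: E[Y^{tv}] = E[ (D · r(Y,X) / (e(X)·π(X))) · Y ], where r(Y,X) = E[Z | Y, X, D=1]·1{D=1} interpreted as the posterior probability that the latent version equals v given the observed data. -/
open MeasureTheory ProbabilityTheory

/-- Per-ω factorization from kernel-level conditional independence on rational `Iic` sets. -/
lemma aux_factor {Ω : Type*} {m : MeasurableSpace Ω} [mΩ : MeasurableSpace Ω]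
    [StandardBorelSpace Ω] [Nonempty Ω] {μ : Measure Ω} [IsProbabilityMeasure μ]
    (hm : m ≤ mΩ) {f : Ω → ℝ} (hf : Measurable f) {A : Set Ω} (hA : MeasurableSet A)
    (hq : ∀ q : ℚ, ∀ᵐ ω ∂μ,
      condExpKernel μ m ω (f ⁻¹' Set.Iic (q:ℝ) ∩ A)
        = condExpKernel μ m ω (f ⁻¹' Set.Iic (q:ℝ)) * condExpKernel μ m ω A)
    {g : ℝ → ℝ} (hg : Measurable g) (hgi : Integrable (fun ω => g (f ω)) μ) :
    μ[fun ω => A.indicator (fun _ => (1:ℝ)) ω * g (f ω) | m]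
      =ᵐ[μ] fun ω => (condExpKernel μ m ω A).toReal * (μ[fun ω => g (f ω) | m]) ω := by
  classical
  have hind_int : Integrable (fun ω => A.indicator (fun _ => (1:ℝ)) ω * g (f ω)) μ := by
    refine hgi.abs.mono' (((measurable_one.indicator hA).mul (hg.comp hf)).aestronglyMeasurable) ?_
    refine Filter.Eventually.of_forall fun ω => ?_
    by_cases hω : ω ∈ A
    · simp [Set.indicator_of_mem, hω]
    · simp [Set.indicator_of_notMem, hω, abs_nonneg]
  refine (condExp_ae_eq_integral_condExpKernel hm hind_int).trans ?_
  filter_upwards [ae_all_iff.mpr hq,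
    (condExp_ae_eq_integral_condExpKernel hm hgi)] with ω hqω hcω
  have hmeq : ((condExpKernel μ m ω).restrict A).map f
      = (condExpKernel μ m ω A) • ((condExpKernel μ m ω).map f) := by
    haveI h1 : IsFiniteMeasure (((condExpKernel μ m ω).restrict A).map f) := by
      constructor
      rw [Measure.map_apply hf MeasurableSet.univ]
      exact lt_of_le_of_lt (le_trans (Measure.restrict_apply_le _ _) (measure_mono (Set.subset_univ _)))
        (measure_lt_top _ _)
    haveI h2 : IsFiniteMeasure ((condExpKernel μ m ω A) • ((condExpKernel μ m ω).map f)) := by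
      constructor
      rw [Measure.smul_apply, smul_eq_mul]
      refine ENNReal.mul_lt_top (measure_lt_top _ _) ?_
      rw [Measure.map_apply hf MeasurableSet.univ, Set.preimage_univ]
      exact measure_lt_top _ _
    refine ext_of_generate_finite _
      (by rw [BorelSpace.measurable_eq (α := ℝ)]; exact Real.borel_eq_generateFrom_Iic_rat)
      Real.isPiSystem_Iic_rat ?_ ?_
    · intro s hs
      rw [Set.mem_iUnion] at hs
      obtain ⟨q, hq'⟩ := hs
      rw [Set.mem_singleton_iff] at hq'
      subst hq'
      rw [Measure.map_apply hf measurableSet_Iic,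
        Measure.restrict_apply (hf measurableSet_Iic), Measure.smul_apply,
        Measure.map_apply hf measurableSet_Iic, smul_eq_mul, mul_comm]
      exact hqω q
    · rw [Measure.map_apply hf MeasurableSet.univ, Set.preimage_univ,
        Measure.restrict_apply MeasurableSet.univ, Set.univ_inter, Measure.smul_apply,
        Measure.map_apply hf MeasurableSet.univ, Set.preimage_univ, measure_univ, smul_eq_mul,
        mul_one]
  have hstep : ∫ y, A.indicator (fun _ => (1:ℝ)) y * g (f y) ∂(condExpKernel μ m ω)
      = (condExpKernel μ m ω A).toReal * ∫ y, g (f y) ∂(condExpKernel μ m ω) := by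
    have h1 : (fun y => A.indicator (fun _ => (1:ℝ)) y * g (f y))
        = A.indicator (fun y => g (f y)) := by
      funext y
      rw [Set.indicator_apply, Set.indicator_apply]
      split <;> simp
    rw [h1, integral_indicator hA]
    calc ∫ y in A, g (f y) ∂(condExpKernel μ m ω)
        = ∫ y, g y ∂(((condExpKernel μ m ω).restrict A).map f) :=
          (integral_map hf.aemeasurable hg.aestronglyMeasurable).symm
      _ = ∫ y, g y ∂((condExpKernel μ m ω A) • ((condExpKernel μ m ω).map f)) := by rw [hmeq]
      _ = (condExpKernel μ m ω A).toReal * ∫ y, g y ∂((condExpKernel μ m ω).map f) := by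
          rw [integral_smul_measure, smul_eq_mul]
      _ = (condExpKernel μ m ω A).toReal * ∫ y, g (f y) ∂(condExpKernel μ m ω) := by
          rw [integral_map hf.aemeasurable hg.aestronglyMeasurable]
  rw [hstep, hcω]

/-- Integrability of an `m`-measurable-weighted integrable function under a conditional bound. -/
lemma aux_integrable {Ω : Type*} {m : MeasurableSpace Ω} [mΩ : MeasurableSpace Ω]
    {μ : Measure Ω} [IsProbabilityMeasure μ] (hm : m ≤ mΩ) {b G ρ c : Ω → ℝ}
    (hb : Measurable[m] b) (hbnn : ∀ ω, 0 ≤ b ω)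
    (hG : Measurable G) (hGnn : ∀ ω, 0 ≤ G ω) (hGi : Integrable G μ)
    (hρ : μ[G | m] =ᵐ[μ] ρ)
    (hci : Integrable c μ)
    (hbound : ∀ᵐ ω ∂μ, 0 ≤ ρ ω ∧ b ω * ρ ω ≤ c ω) :
    Integrable (fun ω => b ω * G ω) μ := by
  have hbm : Measurable b := hb.mono hm le_rfl
  -- truncated weights
  have hgn_int : ∀ n : ℕ, Integrable (fun ω => min (b ω) n * G ω) μ := by
    intro n
    refine (hGi.const_mul (n:ℝ)).mono' ((hbm.min measurable_const).mul hG).aestronglyMeasurable ?_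
    refine Filter.Eventually.of_forall fun ω => ?_
    have h0 : 0 ≤ min (b ω) n * G ω :=
      mul_nonneg (le_min (hbnn ω) (Nat.cast_nonneg n)) (hGnn ω)
    rw [Real.norm_eq_abs, abs_of_nonneg h0]
    exact mul_le_mul_of_nonneg_right (min_le_right _ _) (hGnn ω)
  have hgn_le : ∀ n : ℕ, ∫ ω, min (b ω) n * G ω ∂μ ≤ ∫ ω, c ω ∂μ := by
    intro n
    have hpull : μ[(fun ω => min (b ω) n) * G | m]
        =ᵐ[μ] (fun ω => min (b ω) n) * μ[G | m] := by
      refine condExp_stronglyMeasurable_mul_of_bound hm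
        ((hb.min measurable_const).stronglyMeasurable) hGi n ?_
      refine Filter.Eventually.of_forall fun ω => ?_
      rw [Real.norm_eq_abs, abs_of_nonneg (le_min (hbnn ω) (Nat.cast_nonneg n))]
      exact min_le_right _ _
    have heq : ∫ ω, min (b ω) n * G ω ∂μ = ∫ ω, min (b ω) n * ρ ω ∂μ := by
      calc ∫ ω, min (b ω) n * G ω ∂μ
          = ∫ ω, (μ[(fun ω => min (b ω) n) * G | m]) ω ∂μ :=
            (integral_condExp hm (f := (fun ω => min (b ω) n) * G)).symm
        _ = ∫ ω, min (b ω) n * ρ ω ∂μ := by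
            refine integral_congr_ae (hpull.trans ?_)
            filter_upwards [hρ] with ω h
            simp only [Pi.mul_apply, h]
    rw [heq]
    refine integral_mono_ae ?_ hci ?_
    · have : Integrable ((fun ω => min (b ω) n) * μ[G | m]) μ :=
        (integrable_condExp (f := (fun ω => min (b ω) n) * G)).congr hpull
      refine this.congr ?_
      filter_upwards [hρ] with ω h
      simp only [Pi.mul_apply, h]
    · filter_upwards [hbound] with ω hω
      calc min (b ω) n * ρ ω ≤ b ω * ρ ω :=
            mul_le_mul_of_nonneg_right (min_le_left _ _) hω.1
        _ ≤ c ω := hω.2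
  refine ⟨(hbm.mul hG).aestronglyMeasurable, ?_⟩
  rw [hasFiniteIntegral_iff_norm]
  have hptw : ∀ ω, ENNReal.ofReal ‖b ω * G ω‖
      = ⨆ n : ℕ, ENNReal.ofReal (min (b ω) n * G ω) := by
    intro ω
    have h0 : 0 ≤ b ω * G ω := mul_nonneg (hbnn ω) (hGnn ω)
    rw [Real.norm_eq_abs, abs_of_nonneg h0]
    have hmono : Monotone fun n : ℕ => ENNReal.ofReal (min (b ω) n * G ω) := by
      intro i j hij
      exact ENNReal.ofReal_le_ofReal (mul_le_mul_of_nonneg_right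
        (min_le_min le_rfl (Nat.cast_le.mpr hij)) (hGnn ω))
    have hev : ∀ᶠ n : ℕ in Filter.atTop,
        ENNReal.ofReal (min (b ω) n * G ω) = ENNReal.ofReal (b ω * G ω) := by
      rw [Filter.eventually_atTop]
      refine ⟨⌈b ω⌉₊, fun n hn => ?_⟩
      rw [min_eq_left (le_trans (Nat.le_ceil _) (Nat.cast_le.mpr hn))]
    have htend : Filter.Tendsto (fun n : ℕ => ENNReal.ofReal (min (b ω) n * G ω))
        Filter.atTop (nhds (ENNReal.ofReal (b ω * G ω))) :=
      Filter.Tendsto.congr' (Filter.EventuallyEq.symm hev) tendsto_const_nhds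
    exact (tendsto_nhds_unique (tendsto_atTop_iSup hmono) htend).symm
  calc ∫⁻ ω, ENNReal.ofReal ‖b ω * G ω‖ ∂μ
      = ∫⁻ ω, ⨆ n : ℕ, ENNReal.ofReal (min (b ω) n * G ω) ∂μ := by
        exact lintegral_congr fun ω => hptw ω
    _ = ⨆ n : ℕ, ∫⁻ ω, ENNReal.ofReal (min (b ω) n * G ω) ∂μ := by
        refine lintegral_iSup (fun n => ?_) ?_
        · exact ((hbm.min measurable_const).mul hG).ennreal_ofReal
        · intro i j hij ω
          exact ENNReal.ofReal_le_ofReal (mul_le_mul_of_nonneg_right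
            (min_le_min le_rfl (Nat.cast_le.mpr hij)) (hGnn ω))
    _ ≤ ENNReal.ofReal (∫ ω, c ω ∂μ) := by
        refine iSup_le fun n => ?_
        rw [← ofReal_integral_eq_lintegral_ofReal (hgn_int n)
          (Filter.Eventually.of_forall fun ω =>
            mul_nonneg (le_min (hbnn ω) (Nat.cast_nonneg n)) (hGnn ω))]
        exact ENNReal.ofReal_le_ofReal (hgn_le n)
    _ < ⊤ := ENNReal.ofReal_lt_top


/-- responsibility-weighted IPW representation.  Under the IPW
identification assumptions, with `r = E[Z | Y, X, D]` the posterior probability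
of the latent version, `E[Y^{tv}] = E[ D·r(Y,X)·Y / (e(X)·π(X)) ]`. -/
theorem ipw_responsibility_representation
    {Ω : Type*} [mΩ : MeasurableSpace Ω] [StandardBorelSpace Ω] [Nonempty Ω]
    {μ : Measure Ω} [IsProbabilityMeasure μ] {p : ℕ}
    (X : Ω → (Fin p → ℝ)) (D Z Ypo Y : Ω → ℝ)
    (e pi : (Fin p → ℝ) → ℝ)
    (hX : Measurable X) (hD : Measurable D) (hZ : Measurable Z)
    (hYpo : Measurable Ypo) (hY : Measurable Y)
    (he : Measurable e) (hpi : Measurable pi)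
    (hDval : ∀ ω, D ω = 0 ∨ D ω = 1)
    (hZval : ∀ ω, Z ω = 0 ∨ Z ω = 1)
    (hZD : ∀ ω, Z ω = 1 → D ω = 1)
    (hint : Integrable Ypo μ) (hYint : Integrable Y μ)
    -- generalized propensity score: e(X) = P(D=1|X), e(X)·π(X) = P(D=1,Z=1|X)
    (hescore : (fun ω => e (X ω))
        =ᵐ[μ] μ[D | MeasurableSpace.comap X inferInstance])
    (hpiscore : μ[fun ω => D ω * Z ω | MeasurableSpace.comap X inferInstance]
        =ᵐ[μ] fun ω => e (X ω) * pi (X ω))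
    -- positivity
    (hpos : ∀ᵐ ω ∂μ, 0 < e (X ω) ∧ e (X ω) < 1 ∧ 0 < pi (X ω) ∧ pi (X ω) < 1)
    -- weak conditional exchangeability: Y^{tv} ⫫ (D,Z) | X
    (hexch : CondIndepFun (MeasurableSpace.comap X inferInstance) hX.comap_le
        Ypo (fun ω => (D ω, Z ω)) μ)
    -- consistency: Y = Y^{tv} on {D=1, Z=1}
    (hcons : ∀ ω, D ω = 1 → Z ω = 1 → Y ω = Ypo ω)
    -- the posterior responsibility r = E[Z | Y, X, D]
    (R : Ω → ℝ)
    (hR : R =ᵐ[μ] μ[Z | MeasurableSpace.comap (fun ω => (Y ω, X ω, D ω)) inferInstance]) :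
    ∫ ω, Ypo ω ∂μ
      = ∫ ω, (D ω * R ω / (e (X ω) * pi (X ω))) * Y ω ∂μ := by
  classical
  have hmX : MeasurableSpace.comap X inferInstance ≤ mΩ := hX.comap_le
  have hA : MeasurableSet (Z ⁻¹' {1}) := hZ (measurableSet_singleton 1)
  have hZA : Z = (Z ⁻¹' {1}).indicator (fun _ => (1:ℝ)) := by
    funext ω
    rcases hZval ω with h | h
    · rw [h, Set.indicator_apply, if_neg]
      simp only [Set.mem_preimage, Set.mem_singleton_iff, h]
      norm_num
    · rw [h, Set.indicator_apply, if_pos]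
      simp only [Set.mem_preimage, Set.mem_singleton_iff, h]
  -- kernel-level conditional independence on rational Iic sets
  have hq : ∀ q : ℚ, ∀ᵐ ω ∂μ,
      condExpKernel μ (MeasurableSpace.comap X inferInstance) ω
          (Ypo ⁻¹' Set.Iic (q:ℝ) ∩ Z ⁻¹' {1})
        = condExpKernel μ (MeasurableSpace.comap X inferInstance) ω (Ypo ⁻¹' Set.Iic (q:ℝ))
          * condExpKernel μ (MeasurableSpace.comap X inferInstance) ω (Z ⁻¹' {1}) := by
    have hCI := (condIndepFun_iff_condExp_inter_preimage_eq_mul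
      (hm' := hX.comap_le) hYpo (hD.prodMk hZ)).mp hexch
    intro q
    have hPA : (fun ω => (D ω, Z ω)) ⁻¹' (Set.univ ×ˢ {(1:ℝ)}) = Z ⁻¹' {1} := by
      ext ω; simp [eq_comm]
    have h2 := hCI (Set.Iic (q:ℝ)) (Set.univ ×ˢ {(1:ℝ)}) measurableSet_Iic
      (MeasurableSet.univ.prod (measurableSet_singleton 1))
    rw [hPA] at h2
    filter_upwards [h2,
      condExpKernel_ae_eq_condExp hmX ((hYpo measurableSet_Iic).inter hA),
      condExpKernel_ae_eq_condExp hmX (hYpo measurableSet_Iic),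
      condExpKernel_ae_eq_condExp hmX hA] with ω hω e1 e2 e3
    refine (ENNReal.toReal_eq_toReal_iff' (measure_ne_top _ _)
      (ENNReal.mul_ne_top (measure_ne_top _ _) (measure_ne_top _ _))).mp ?_
    rw [ENNReal.toReal_mul]; simp only [← measureReal_def]; rw [e1, e2, e3]
    exact hω
  -- conditional expectation of Z given X
  have hZmX : μ[Z | MeasurableSpace.comap X inferInstance]
      =ᵐ[μ] fun ω => e (X ω) * pi (X ω) := by
    have hDZ : (fun ω => D ω * Z ω) = Z := by
      funext ω
      rcases hZval ω with h | h
      · rw [h, mul_zero]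
      · rw [h, hZD ω h, one_mul]
    rw [← hDZ]
    exact hpiscore
  have hκA : (fun ω => (condExpKernel μ (MeasurableSpace.comap X inferInstance) ω
        (Z ⁻¹' {1})).toReal) =ᵐ[μ] fun ω => e (X ω) * pi (X ω) := by
    refine (condExpKernel_ae_eq_condExp hmX hA).trans ?_
    rw [← hZA]
    exact hZmX
  have hZYpo_int : Integrable (fun ω => Z ω * Ypo ω) μ := by
    refine hint.abs.mono' ((hZ.mul hYpo).aestronglyMeasurable) ?_
    refine Filter.Eventually.of_forall fun ω => ?_
    rcases hZval ω with h | h <;> simp [h, abs_mul, abs_nonneg]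
  have hZabs_int : Integrable (fun ω => Z ω * |Ypo ω|) μ := by
    refine hint.abs.mono' ((hZ.mul hYpo.abs).aestronglyMeasurable) ?_
    refine Filter.Eventually.of_forall fun ω => ?_
    rcases hZval ω with h | h <;> simp [h, abs_mul, abs_nonneg, abs_abs]
  -- identity I : E[Z·Ypo | X] = e·π·E[Ypo | X]
  have hI : μ[fun ω => Z ω * Ypo ω | MeasurableSpace.comap X inferInstance]
      =ᵐ[μ] fun ω => (e (X ω) * pi (X ω))
        * (μ[Ypo | MeasurableSpace.comap X inferInstance]) ω := by
    have h := aux_factor hmX hYpo hA hq (g := fun y => y) measurable_id hint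
    have heq : (fun ω => (Z ⁻¹' {1}).indicator (fun _ => (1:ℝ)) ω * Ypo ω)
        = fun ω => Z ω * Ypo ω := by rw [← hZA]
    rw [heq] at h
    refine h.trans ?_
    filter_upwards [hκA] with ω hω
    rw [hω]
  -- identity II : E[Z·|Ypo| | X] = e·π·E[|Ypo| | X]
  have hII : μ[fun ω => Z ω * |Ypo ω| | MeasurableSpace.comap X inferInstance]
      =ᵐ[μ] fun ω => (e (X ω) * pi (X ω))
        * (μ[fun ω => |Ypo ω| | MeasurableSpace.comap X inferInstance]) ω := by
    have h := aux_factor hmX hYpo hA hq (g := fun y => |y|) measurable_abs hint.abs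
    have heq : (fun ω => (Z ⁻¹' {1}).indicator (fun _ => (1:ℝ)) ω * |Ypo ω|)
        = fun ω => Z ω * |Ypo ω| := by rw [← hZA]
    rw [heq] at h
    refine h.trans ?_
    filter_upwards [hκA] with ω hω
    rw [hω]
  -- integrability of the weighted function F
  have hw₀ : Measurable fun x => (e x * pi x)⁻¹ := (he.mul hpi).inv
  have hbG_int : Integrable
      (fun ω => max ((e (X ω) * pi (X ω))⁻¹) 0 * (Z ω * |Ypo ω|)) μ := by
    refine aux_integrable hmX (b := fun ω => max ((e (X ω) * pi (X ω))⁻¹) 0)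
      (G := fun ω => Z ω * |Ypo ω|)
      (ρ := fun ω => (e (X ω) * pi (X ω))
        * (μ[fun ω => |Ypo ω| | MeasurableSpace.comap X inferInstance]) ω)
      (c := fun ω => (μ[fun ω => |Ypo ω| | MeasurableSpace.comap X inferInstance]) ω)
      ?_ (fun ω => le_max_right _ _) (hZ.mul hYpo.abs)
      (fun ω => by rcases hZval ω with h | h <;> simp [h, abs_nonneg])
      hZabs_int hII integrable_condExp ?_
    · exact (hw₀.max measurable_const).comp (comap_measurable X)
    · have hcnn : ∀ᵐ ω ∂μ, 0 ≤ (μ[fun ω => |Ypo ω| |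
          MeasurableSpace.comap X inferInstance]) ω :=
        condExp_nonneg (Filter.Eventually.of_forall fun ω => abs_nonneg _)
      filter_upwards [hpos, hcnn] with ω h1 h2
      have hep : 0 < e (X ω) * pi (X ω) := mul_pos h1.1 h1.2.2.1
      constructor
      · exact mul_nonneg (le_of_lt hep) h2
      · have hmax : max ((e (X ω) * pi (X ω))⁻¹) 0 = (e (X ω) * pi (X ω))⁻¹ :=
          max_eq_left (le_of_lt (inv_pos.mpr hep))
        rw [hmax, ← mul_assoc, inv_mul_cancel₀ (ne_of_gt hep), one_mul]
  have hF_int : Integrable (fun ω => (e (X ω) * pi (X ω))⁻¹ * (Z ω * Ypo ω)) μ := by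
    refine hbG_int.mono'
      (((hw₀.comp hX).mul (hZ.mul hYpo)).aestronglyMeasurable) ?_
    filter_upwards [hpos] with ω h1
    have hep : 0 < e (X ω) * pi (X ω) := mul_pos h1.1 h1.2.2.1
    have hmax : max ((e (X ω) * pi (X ω))⁻¹) 0 = (e (X ω) * pi (X ω))⁻¹ :=
      max_eq_left (le_of_lt (inv_pos.mpr hep))
    rw [hmax, Real.norm_eq_abs, abs_mul, abs_mul,
      abs_of_nonneg (le_of_lt (inv_pos.mpr hep))]
    rcases hZval ω with h | h <;> simp [h]
  -- E[F | X] = E[Ypo | X]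
  have hw₀m : StronglyMeasurable[MeasurableSpace.comap X inferInstance]
      (fun ω => (e (X ω) * pi (X ω))⁻¹) :=
    (hw₀.comp (comap_measurable X)).stronglyMeasurable
  have hF_condexp : μ[(fun ω => (e (X ω) * pi (X ω))⁻¹) * (fun ω => Z ω * Ypo ω) |
        MeasurableSpace.comap X inferInstance]
      =ᵐ[μ] μ[Ypo | MeasurableSpace.comap X inferInstance] := by
    have hpull := condExp_mul_of_stronglyMeasurable_left (m := MeasurableSpace.comap X inferInstance)
      (μ := μ) hw₀m (g := fun ω => Z ω * Ypo ω) hF_int hZYpo_int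
    refine hpull.trans ?_
    filter_upwards [hI, hpos] with ω h1' h2
    simp only [Pi.mul_apply]
    rw [h1']
    have hep : 0 < e (X ω) * pi (X ω) := mul_pos h2.1 h2.2.2.1
    rw [← mul_assoc, inv_mul_cancel₀ (ne_of_gt hep), one_mul]
  have step1 : ∫ ω, Ypo ω ∂μ
      = ∫ ω, (e (X ω) * pi (X ω))⁻¹ * (Z ω * Ypo ω) ∂μ := by
    rw [← integral_condExp hmX (f := Ypo), ← integral_congr_ae hF_condexp,
      integral_condExp hmX]
    rfl
  -- step 3 : replace Z by R via tower property
  have hm2 : MeasurableSpace.comap (fun ω => (Y ω, X ω, D ω)) inferInstance ≤ mΩ :=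
    (hY.prodMk (hX.prodMk hD)).comap_le
  have hψ : Measurable fun v : ℝ × (Fin p → ℝ) × ℝ => v.2.2 * v.1 * (e v.2.1 * pi v.2.1)⁻¹ :=
    (measurable_snd.snd.mul measurable_fst).mul (hw₀.comp measurable_snd.fst)
  have hWm2 : StronglyMeasurable[MeasurableSpace.comap (fun ω => (Y ω, X ω, D ω)) inferInstance]
      (fun ω => D ω * Y ω * (e (X ω) * pi (X ω))⁻¹) :=
    (hψ.comp (comap_measurable fun ω => (Y ω, X ω, D ω))).stronglyMeasurable
  have hWZ_eq_F : ((fun ω => D ω * Y ω * (e (X ω) * pi (X ω))⁻¹) * Z)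
      = fun ω => (e (X ω) * pi (X ω))⁻¹ * (Z ω * Ypo ω) := by
    funext ω
    simp only [Pi.mul_apply]
    rcases hZval ω with h | h
    · rw [h]; ring
    · rw [h, hZD ω h, hcons ω (hZD ω h) h]; ring
  have hZ_int : Integrable Z μ := by
    refine (integrable_const (1:ℝ)).mono' hZ.aestronglyMeasurable ?_
    refine Filter.Eventually.of_forall fun ω => ?_
    rcases hZval ω with h | h <;> simp [h]
  have hWZ_int : Integrable ((fun ω => D ω * Y ω * (e (X ω) * pi (X ω))⁻¹) * Z) μ := by
    rw [hWZ_eq_F]; exact hF_int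
  have hpull2 : μ[(fun ω => D ω * Y ω * (e (X ω) * pi (X ω))⁻¹) * Z |
        MeasurableSpace.comap (fun ω => (Y ω, X ω, D ω)) inferInstance]
      =ᵐ[μ] (fun ω => D ω * Y ω * (e (X ω) * pi (X ω))⁻¹)
        * μ[Z | MeasurableSpace.comap (fun ω => (Y ω, X ω, D ω)) inferInstance] :=
    condExp_mul_of_stronglyMeasurable_left hWm2 hWZ_int hZ_int
  have step2 : ∫ ω, (e (X ω) * pi (X ω))⁻¹ * (Z ω * Ypo ω) ∂μ
      = ∫ ω, (D ω * Y ω * (e (X ω) * pi (X ω))⁻¹) * R ω ∂μ := by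
    rw [← hWZ_eq_F, ← integral_condExp hm2
      (f := (fun ω => D ω * Y ω * (e (X ω) * pi (X ω))⁻¹) * Z),
      integral_congr_ae hpull2]
    refine integral_congr_ae ?_
    filter_upwards [hR] with ω h
    simp only [Pi.mul_apply, h]
  rw [step1, step2]
  refine integral_congr_ae (Filter.Eventually.of_forall fun ω => ?_)
  simp only [div_eq_mul_inv]
  ring
end

section
/- Let (Y_i, X_i, D_i) be i.i.d., Θ a compact metric space, and g : (sample point) × Θ → ℝ such that θ ↦ g_i(θ) is continuous almost surely and |g_i(θ)| ≤ M_i for all θ with E[M_1] < ∞. If estimators θ̂_n → θ* in probability with θ* ∈ Θ, then (1/n) ∑_{i=1}^n g_i(θ̂_n) → E[g_1(θ*)] in probability. -/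
open MeasureTheory ProbabilityTheory Filter BigOperators Topology

section Aux

variable {α : Type*} {Θ : Type*} [MetricSpace Θ]

/-- deviation at the m-th dense point, if it is within `1/(k+1)` of `θstar`. -/
noncomputable def phiAux (g : α → Θ → ℝ) (e : ℕ → Θ) (θstar : Θ) (k m : ℕ) (a : α) : ℝ :=
  if dist (e m) θstar ≤ ((k : ℝ) + 1)⁻¹ then |g a (e m) - g a θstar| else 0

/-- running maxima of `phiAux`. -/
noncomputable def FAux (g : α → Θ → ℝ) (e : ℕ → Θ) (θstar : Θ) (k : ℕ) : ℕ → α → ℝ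
  | 0 => phiAux g e θstar k 0
  | (m + 1) => fun a => max (FAux g e θstar k m a) (phiAux g e θstar k (m + 1) a)

/-- local modulus-of-continuity envelope. -/
noncomputable def hAux (g : α → Θ → ℝ) (e : ℕ → Θ) (θstar : Θ) (k : ℕ) (a : α) : ℝ :=
  ⨆ N, FAux g e θstar k N a

variable {g : α → Θ → ℝ} {e : ℕ → Θ} {θstar : Θ} {M : α → ℝ}

lemma phiAux_nonneg (k m : ℕ) (a : α) : 0 ≤ phiAux g e θstar k m a := by
  unfold phiAux; split_ifs <;> positivity

lemma phiAux_le (hdom : ∀ a θ, |g a θ| ≤ M a) (k m : ℕ) (a : α) :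
    phiAux g e θstar k m a ≤ 2 * M a := by
  have h0 : (0:ℝ) ≤ M a := le_trans (abs_nonneg _) (hdom a θstar)
  unfold phiAux; split_ifs
  · calc |g a (e m) - g a θstar| ≤ |g a (e m)| + |g a θstar| := abs_sub _ _
      _ ≤ M a + M a := add_le_add (hdom _ _) (hdom _ _)
      _ = 2 * M a := by ring
  · linarith

lemma FAux_mono (k : ℕ) (a : α) : Monotone fun N => FAux g e θstar k N a := by
  apply monotone_nat_of_le_succ
  intro N
  exact le_max_left _ _

lemma phiAux_le_FAux (k m : ℕ) (a : α) : phiAux g e θstar k m a ≤ FAux g e θstar k m a := by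
  cases m with
  | zero => exact le_rfl
  | succ m => exact le_max_right _ _

lemma FAux_le (hdom : ∀ a θ, |g a θ| ≤ M a) (k N : ℕ) (a : α) :
    FAux g e θstar k N a ≤ 2 * M a := by
  induction N with
  | zero => exact phiAux_le hdom k 0 a
  | succ N ih => exact max_le ih (phiAux_le hdom k (N+1) a)

lemma FAux_nonneg (k N : ℕ) (a : α) : 0 ≤ FAux g e θstar k N a :=
  le_trans (phiAux_nonneg k 0 a) (FAux_mono k a (Nat.zero_le N))

lemma FAux_bddAbove (hdom : ∀ a θ, |g a θ| ≤ M a) (k : ℕ) (a : α) :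
    BddAbove (Set.range fun N => FAux g e θstar k N a) := by
  refine ⟨2 * M a, ?_⟩
  rintro x ⟨N, rfl⟩
  exact FAux_le hdom k N a

lemma hAux_le (hdom : ∀ a θ, |g a θ| ≤ M a) (k : ℕ) (a : α) :
    hAux g e θstar k a ≤ 2 * M a :=
  ciSup_le fun N => FAux_le hdom k N a

lemma FAux_le_hAux (hdom : ∀ a θ, |g a θ| ≤ M a) (k N : ℕ) (a : α) :
    FAux g e θstar k N a ≤ hAux g e θstar k a :=
  le_ciSup (FAux_bddAbove hdom k a) N

lemma hAux_nonneg (hdom : ∀ a θ, |g a θ| ≤ M a) (k : ℕ) (a : α) :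
    0 ≤ hAux g e θstar k a :=
  le_trans (FAux_nonneg k 0 a) (FAux_le_hAux hdom k 0 a)

lemma tendsto_FAux_hAux (hdom : ∀ a θ, |g a θ| ≤ M a) (k : ℕ) (a : α) :
    Tendsto (fun N => FAux g e θstar k N a) atTop (𝓝 (hAux g e θstar k a)) :=
  tendsto_atTop_ciSup (FAux_mono k a) (FAux_bddAbove hdom k a)

variable [MeasurableSpace α] [MeasurableSpace Θ]

lemma measurable_g_slice (hg : Measurable (Function.uncurry g)) (θ : Θ) :
    Measurable fun a => g a θ :=
  hg.comp (measurable_id.prodMk measurable_const)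

lemma phiAux_measurable (hg : Measurable (Function.uncurry g)) (k m : ℕ) :
    Measurable (phiAux g e θstar k m) := by
  unfold phiAux
  split_ifs
  · exact ((measurable_g_slice hg _).sub (measurable_g_slice hg _)).abs
  · exact measurable_const

lemma FAux_measurable (hg : Measurable (Function.uncurry g)) (k N : ℕ) :
    Measurable (FAux g e θstar k N) := by
  induction N with
  | zero => exact phiAux_measurable hg k 0
  | succ N ih => exact ih.max (phiAux_measurable hg k (N+1))

lemma hAux_measurable (hdom : ∀ a θ, |g a θ| ≤ M a) (hg : Measurable (Function.uncurry g))
    (k : ℕ) : Measurable (hAux g e θstar k) := by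
  apply measurable_of_tendsto_metrizable (fun N => FAux_measurable hg k N)
  exact tendsto_pi_nhds.2 fun a => tendsto_FAux_hAux hdom k a

/-- key bound: any deviation within the open `1/(k+1)`-ball is dominated by the envelope. -/
lemma abs_sub_le_hAux (hdom : ∀ a θ, |g a θ| ≤ M a) (he : DenseRange e) {a : α}
    (hconta : Continuous (g a)) {k : ℕ} {θ : Θ} (hθ : dist θ θstar < ((k : ℝ) + 1)⁻¹) :
    |g a θ - g a θstar| ≤ hAux g e θstar k a := by
  refine le_of_forall_pos_le_add fun ε hε => ?_
  have hr : 0 < ((k : ℝ) + 1)⁻¹ - dist θ θstar := by linarith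
  obtain ⟨δ1, hδ1, hδ1'⟩ := Metric.continuousAt_iff.1 (hconta.continuousAt (x := θ)) ε hε
  obtain ⟨m, hm⟩ := he.exists_dist_lt θ (lt_min hδ1 hr)
  have hm1 : dist (e m) θ < δ1 := by rw [dist_comm]; exact lt_of_lt_of_le hm (min_le_left _ _)
  have hm2 : dist (e m) θstar ≤ ((k : ℝ) + 1)⁻¹ := by
    have := dist_triangle (e m) θ θstar
    have h1 : dist (e m) θ < ((k : ℝ) + 1)⁻¹ - dist θ θstar := by
      rw [dist_comm]; exact lt_of_lt_of_le hm (min_le_right _ _)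
    linarith
  have hphi : phiAux g e θstar k m a = |g a (e m) - g a θstar| := if_pos hm2
  have hnear : |g a θ - g a (e m)| < ε := by
    have := hδ1' hm1
    rwa [Real.dist_eq, abs_sub_comm] at this
  have hle : phiAux g e θstar k m a ≤ hAux g e θstar k a :=
    le_trans (phiAux_le_FAux k m a) (FAux_le_hAux hdom k m a)
  calc |g a θ - g a θstar| ≤ |g a θ - g a (e m)| + |g a (e m) - g a θstar| := by
        have := abs_sub_le (g a θ) (g a (e m)) (g a θstar); linarith
    _ ≤ ε + phiAux g e θstar k m a := by rw [hphi]; linarith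
    _ ≤ hAux g e θstar k a + ε := by linarith

lemma hAux_tendsto_zero (hdom : ∀ a θ, |g a θ| ≤ M a) {a : α}
    (hconta : Continuous (g a)) :
    Tendsto (fun k => hAux g e θstar k a) atTop (𝓝 0) := by
  rw [Metric.tendsto_atTop]
  intro ε hε
  obtain ⟨δ0, hδ0, hδ0'⟩ := Metric.continuousAt_iff.1 (hconta.continuousAt (x := θstar)) (ε/2)
    (by linarith)
  obtain ⟨N, hN⟩ := exists_nat_gt δ0⁻¹
  refine ⟨N, fun k hk => ?_⟩
  have hkδ : ((k : ℝ) + 1)⁻¹ < δ0 := by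
    have h1 : δ0⁻¹ < (k : ℝ) + 1 := by
      have : (N : ℝ) ≤ k := Nat.cast_le.2 hk
      linarith
    have h2 : (0 : ℝ) < (k : ℝ) + 1 := by positivity
    calc ((k : ℝ) + 1)⁻¹ < (δ0⁻¹)⁻¹ := by
          apply inv_strictAnti₀ (by positivity) h1
      _ = δ0 := inv_inv δ0
  have hphi : ∀ m, phiAux g e θstar k m a ≤ ε / 2 := by
    intro m
    unfold phiAux
    split_ifs with hcond
    · have := hδ0' (lt_of_le_of_lt hcond hkδ)
      rw [Real.dist_eq] at this
      linarith
    · linarith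
  have hF : ∀ N', FAux g e θstar k N' a ≤ ε / 2 := by
    intro N'
    induction N' with
    | zero => exact hphi 0
    | succ N' ih => exact max_le ih (hphi (N'+1))
  have hh : hAux g e θstar k a ≤ ε / 2 := ciSup_le hF
  rw [Real.dist_eq, sub_zero, abs_of_nonneg (hAux_nonneg hdom k a)]
  linarith

end Aux

/-- Law of large numbers, in-measure version, for a function of i.i.d. data. -/
lemma lln_aux {Ω : Type*} [mΩ : MeasurableSpace Ω] {μ : Measure Ω} [IsProbabilityMeasure μ]
    {α : Type*} [MeasurableSpace α]
    (ξ : ℕ → Ω → α) (hξ : ∀ i, Measurable (ξ i))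
    (hindep : iIndepFun ξ μ)
    (hident : ∀ i, Measure.map (ξ i) μ = Measure.map (ξ 0) μ)
    (f : α → ℝ) (hf : Measurable f)
    (hfint : Integrable (fun ω => f (ξ 0 ω)) μ) :
    TendstoInMeasure μ
      (fun (n : ℕ) ω => (n : ℝ)⁻¹ * ∑ i ∈ Finset.range n, f (ξ i ω)) atTop
      (fun _ => ∫ ω, f (ξ 0 ω) ∂μ) := by
  have hX : ∀ i, Measurable fun ω => f (ξ i ω) := fun i => hf.comp (hξ i)
  have hpair : Pairwise (Function.onFun (IndepFun · · μ) fun i ω => f (ξ i ω)) := by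
    intro i j hij
    exact (hindep.indepFun hij).comp hf hf
  have hid : ∀ i, IdentDistrib (fun ω => f (ξ i ω)) (fun ω => f (ξ 0 ω)) μ μ := by
    intro i
    exact IdentDistrib.comp ⟨(hξ i).aemeasurable, (hξ 0).aemeasurable, hident i⟩ hf
  have hae := strong_law_ae_real (fun i ω => f (ξ i ω)) hfint hpair hid
  refine tendstoInMeasure_of_tendsto_ae (fun n => ?_) ?_
  · exact (((Finset.range n).measurable_sum fun i _ => hX i).const_mul _).aestronglyMeasurable
  · filter_upwards [hae] with ω hω
    simpa [div_eq_inv_mul] using hω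

/-- key step in Theorem 1 of the paper: with i.i.d. data, a
compact parameter space, an a.s.-continuous and integrably dominated criterion
function, and estimators converging in probability to `θ*`, the plug-in sample
average `(1/n) ∑ g(ξᵢ, θ̂ₙ)` converges in probability to `E[g(ξ₁, θ*)]`. -/
theorem plugin_sample_average_consistency
    {Ω : Type*} [mΩ : MeasurableSpace Ω]
    {μ : Measure Ω} [IsProbabilityMeasure μ]
    {α : Type*} [MeasurableSpace α]
    {Θ : Type*} [MetricSpace Θ] [CompactSpace Θ]
    [MeasurableSpace Θ] [BorelSpace Θ]
    -- i.i.d. sample (each ξ i stands for the data point (Yᵢ, Xᵢ, Dᵢ))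
    (ξ : ℕ → Ω → α) (hξ : ∀ i, Measurable (ξ i))
    (hindep : iIndepFun ξ μ)
    (hident : ∀ i, Measure.map (ξ i) μ = Measure.map (ξ 0) μ)
    -- criterion function, jointly measurable, a.s. continuous in θ
    (g : α → Θ → ℝ) (hg : Measurable (Function.uncurry g))
    (hcont : ∀ᵐ a ∂(Measure.map (ξ 0) μ), Continuous (fun θ => g a θ))
    -- integrable envelope
    (M : α → ℝ) (hMmeas : Measurable M)
    (hdom : ∀ a θ, |g a θ| ≤ M a)
    (hMint : Integrable (fun ω => M (ξ 0 ω)) μ)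
    -- estimators converging in probability to θ* ∈ Θ
    (θhat : ℕ → Ω → Θ) (hθhat : ∀ n, Measurable (θhat n))
    (θstar : Θ)
    (hθconv : TendstoInMeasure μ θhat atTop (fun _ => θstar)) :
    TendstoInMeasure μ
      (fun (n : ℕ) ω => (n : ℝ)⁻¹ * ∑ i ∈ Finset.range n, g (ξ i ω) (θhat n ω))
      atTop
      (fun _ => ∫ ω, g (ξ 0 ω) θstar ∂μ) := by
  haveI : Nonempty Θ := ⟨θstar⟩
  set e : ℕ → Θ := TopologicalSpace.denseSeq Θ with he_def
  have he : DenseRange e := TopologicalSpace.denseRange_denseSeq Θ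
  -- a.e. continuity, simultaneously for all coordinates
  have hcont_all : ∀ᵐ ω ∂μ, ∀ i, Continuous (g (ξ i ω)) := by
    rw [ae_all_iff]
    intro i
    exact ae_of_ae_map (p := fun a => Continuous (g a)) (hξ i).aemeasurable
      (by rw [hident i]; exact hcont)
  -- LLN at θstar
  have hgθint : Integrable (fun ω => g (ξ 0 ω) θstar) μ := by
    refine hMint.mono ((measurable_g_slice hg θstar).comp (hξ 0)).aestronglyMeasurable ?_
    filter_upwards with ω
    rw [Real.norm_eq_abs, Real.norm_eq_abs]
    exact le_trans (hdom _ _) (le_abs_self _)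
  have hT := lln_aux ξ hξ hindep hident (fun a => g a θstar) (measurable_g_slice hg θstar) hgθint
  -- LLN for the envelopes
  have hhmeas : ∀ k, Measurable (hAux g e θstar k) := fun k => hAux_measurable hdom hg k
  have hhint : ∀ k, Integrable (fun ω => hAux g e θstar k (ξ 0 ω)) μ := by
    intro k
    refine (hMint.const_mul 2).mono ((hhmeas k).comp (hξ 0)).aestronglyMeasurable ?_
    filter_upwards with ω
    rw [Real.norm_eq_abs, Real.norm_eq_abs, abs_of_nonneg (hAux_nonneg hdom k _)]
    exact le_trans (hAux_le hdom k _) (le_abs_self _)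
  have hS := fun k => lln_aux ξ hξ hindep hident (hAux g e θstar k) (hhmeas k) (hhint k)
  -- DCT: the mean envelope tends to 0
  have hDCT : Tendsto (fun k => ∫ ω, hAux g e θstar k (ξ 0 ω) ∂μ) atTop (𝓝 0) := by
    have h0 : (0 : ℝ) = ∫ (_ : Ω), (0 : ℝ) ∂μ := by simp
    rw [h0]
    refine tendsto_integral_of_dominated_convergence (fun ω => 2 * M (ξ 0 ω))
      (fun k => ((hhmeas k).comp (hξ 0)).aestronglyMeasurable) (hMint.const_mul 2) ?_ ?_
    · intro k
      filter_upwards with ω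
      rw [Real.norm_eq_abs, abs_of_nonneg (hAux_nonneg hdom k _)]
      exact hAux_le hdom k _
    · have h1 : ∀ᵐ ω ∂μ, Continuous (g (ξ 0 ω)) :=
        ae_of_ae_map (p := fun a => Continuous (g a)) (hξ 0).aemeasurable hcont
      filter_upwards [h1] with ω hω
      exact hAux_tendsto_zero hdom hω
  -- main argument
  rw [tendstoInMeasure_iff_dist] at hθconv hT ⊢
  replace hS := fun k => tendstoInMeasure_iff_dist.1 (hS k)
  intro ε hε
  obtain ⟨k, hk⟩ := (hDCT.eventually_lt_const (show (0:ℝ) < ε/4 by linarith)).exists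
  set c : ℝ := ∫ ω, hAux g e θstar k (ξ 0 ω) ∂μ with hc_def
  have hc0 : 0 ≤ c := integral_nonneg fun ω => hAux_nonneg hdom k _
  have hkpos : (0 : ℝ) < ((k : ℝ) + 1)⁻¹ := by positivity
  have tB := hθconv _ hkpos
  have tC := hS k _ (show (0:ℝ) < ε/4 by linarith)
  have tD := hT _ (show (0:ℝ) < ε/2 by linarith)
  set Eg : ℝ := ∫ ω, g (ξ 0 ω) θstar ∂μ with hEg_def
  set A : ℕ → Ω → ℝ := fun n ω => (n : ℝ)⁻¹ * ∑ i ∈ Finset.range n, g (ξ i ω) (θhat n ω)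
    with hA_def
  set S : ℕ → Ω → ℝ := fun n ω => (n : ℝ)⁻¹ * ∑ i ∈ Finset.range n, hAux g e θstar k (ξ i ω)
    with hS_def
  set T : ℕ → Ω → ℝ := fun n ω => (n : ℝ)⁻¹ * ∑ i ∈ Finset.range n, g (ξ i ω) θstar with hT_def
  set B : ℕ → Set Ω := fun n => {ω | ((k : ℝ) + 1)⁻¹ ≤ dist (θhat n ω) θstar} with hB_def
  set C : ℕ → Set Ω := fun n => {ω | ε/4 ≤ dist (S n ω) c} with hC_def
  set D : ℕ → Set Ω := fun n => {ω | ε/2 ≤ dist (T n ω) Eg} with hD_def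
  have hsub : ∀ n, μ {ω | ε ≤ dist (A n ω) Eg} ≤ μ (B n) + μ (C n) + μ (D n) := by
    intro n
    have hmono : μ {ω | ε ≤ dist (A n ω) Eg} ≤ μ (B n ∪ C n ∪ D n) := by
      apply measure_mono_ae
      filter_upwards [hcont_all] with ω hω hmem
      by_contra hnot
      have hB' : ω ∉ B n := fun h => hnot (Or.inl (Or.inl h))
      have hC' : ω ∉ C n := fun h => hnot (Or.inl (Or.inr h))
      have hD' : ω ∉ D n := fun h => hnot (Or.inr h)
      have hB'' : dist (θhat n ω) θstar < ((k : ℝ) + 1)⁻¹ := lt_of_not_ge fun h => hB' h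
      have hC'' : dist (S n ω) c < ε/4 := lt_of_not_ge fun h => hC' h
      have hD'' : dist (T n ω) Eg < ε/2 := lt_of_not_ge fun h => hD' h
      have key : |A n ω - T n ω| ≤ S n ω := by
        have hstep : |∑ i ∈ Finset.range n, (g (ξ i ω) (θhat n ω) - g (ξ i ω) θstar)|
            ≤ ∑ i ∈ Finset.range n, hAux g e θstar k (ξ i ω) := by
          refine le_trans (Finset.abs_sum_le_sum_abs _ _) (Finset.sum_le_sum fun i _ => ?_)
          exact abs_sub_le_hAux hdom he (hω i) hB''
        have hAT : A n ω - T n ω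
            = (n : ℝ)⁻¹ * ∑ i ∈ Finset.range n, (g (ξ i ω) (θhat n ω) - g (ξ i ω) θstar) := by
          rw [hA_def, hT_def]
          simp only
          rw [Finset.sum_sub_distrib, mul_sub]
        rw [hAT, abs_mul, abs_of_nonneg (by positivity : (0:ℝ) ≤ (n:ℝ)⁻¹)]
        exact mul_le_mul_of_nonneg_left hstep (by positivity)
      have hSsmall : S n ω < ε/2 := by
        have : S n ω ≤ |S n ω - c| + c := by
          have := le_abs_self (S n ω - c); linarith
        rw [Real.dist_eq] at hC''
        linarith
      have : dist (A n ω) Eg < ε := by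
        have h1 : dist (A n ω) Eg ≤ dist (A n ω) (T n ω) + dist (T n ω) Eg := dist_triangle _ _ _
        rw [Real.dist_eq (A n ω) (T n ω)] at h1
        linarith
      have hmem' : ε ≤ dist (A n ω) Eg := hmem
      linarith
    refine hmono.trans ?_
    exact (measure_union_le _ _).trans (add_le_add_left (measure_union_le _ _) _)
  have hzero : Tendsto (fun n => μ (B n) + μ (C n) + μ (D n)) atTop (𝓝 0) := by
    have := (tB.add tC).add tD
    simpa using this
  exact tendsto_of_tendsto_of_tendsto_of_le_of_le tendsto_const_nhds hzero
    (fun n => zero_le) hsub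
end

section
/- Under the IPW identification assumptions for each version v in a finite set V, if ψ_v = E[Y^{tv}] is identified for each v and π_v(x) = P(V=v | T=t, X=x), then the treatment-level mean potential outcome satisfies E[Y^{(t)}] = E[ ∑_{v ∈ V} π_v(X) · E[Y^{tv} | X] ], i.e., the treatment-specific average outcome is the version-probability-weighted mixture of version-specific conditional means, marginalized over X. -/
open MeasureTheory ProbabilityTheory BigOperators

lemma setIntegral_eq_measure_mul_integral_of_rat
    {α : Type*} [MeasurableSpace α] (ν : Measure α) [IsProbabilityMeasure ν]
    {f : α → ℝ} (hf : Measurable f) {T : Set α} (hT : MeasurableSet T)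
    (h : ∀ q : ℚ, ν (f ⁻¹' Set.Iic (q : ℝ) ∩ T) = ν (f ⁻¹' Set.Iic (q : ℝ)) * ν T) :
    ∫ y, T.indicator f y ∂ν = (ν T).toReal * ∫ y, f y ∂ν := by
  rw [integral_indicator hT]
  have hmap : (ν.restrict T).map f = ν T • ν.map f := by
    refine ext_of_generate_finite _
      ((BorelSpace.measurable_eq).trans Real.borel_eq_generateFrom_Iic_rat)
      Real.isPiSystem_Iic_rat ?_ ?_
    · rintro s hs
      simp only [Set.mem_iUnion, Set.mem_singleton_iff] at hs
      obtain ⟨q, rfl⟩ := hs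
      rw [Measure.map_apply hf measurableSet_Iic, Measure.smul_apply,
        Measure.map_apply hf measurableSet_Iic,
        Measure.restrict_apply (hf measurableSet_Iic), h q, mul_comm, smul_eq_mul]
    · rw [Measure.map_apply hf MeasurableSet.univ, Measure.smul_apply,
        Measure.map_apply hf MeasurableSet.univ]
      simp [Measure.restrict_apply_univ]
  calc ∫ y in T, f y ∂ν = ∫ x, id x ∂((ν.restrict T).map f) := by
        rw [integral_map hf.aemeasurable aestronglyMeasurable_id]; rfl
    _ = ∫ x, id x ∂(ν T • ν.map f) := by rw [hmap]
    _ = (ν T).toReal * ∫ x, id x ∂(ν.map f) := by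
        rw [integral_smul_measure]; rfl
    _ = (ν T).toReal * ∫ y, f y ∂ν := by
        rw [integral_map hf.aemeasurable aestronglyMeasurable_id]; rfl

/-- the treatment-specific mean potential outcome is the
version-probability-weighted mixture of version-specific conditional means:
`E[Y^{(t)}] = E[ ∑_v π_v(X) E[Y^{tv} | X] ]`, where the version is assigned
according to its natural conditional distribution `π_v(X)`. -/
theorem version_mixed_mean_outcome
    {Ω : Type*} [mΩ : MeasurableSpace Ω] [StandardBorelSpace Ω] [Nonempty Ω]
    {μ : Measure Ω} [IsProbabilityMeasure μ] {p : ℕ}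
    {V : Type*} [Fintype V] [MeasurableSpace V] [MeasurableSingletonClass V]
    (X : Ω → (Fin p → ℝ)) (hX : Measurable X)
    -- version-specific potential outcomes Y^{tv}, each integrable
    (Ypo : V → Ω → ℝ) (hYpo : ∀ v, Measurable (Ypo v))
    (hint : ∀ v, Integrable (Ypo v) μ)
    (Vr : Ω → V) (hVr : Measurable Vr)
    -- gating probabilities: P(V = v | X) = π_v(X)
    (pi : V → (Fin p → ℝ) → ℝ) (hpi : ∀ v, Measurable (pi v))
    (hgate : ∀ v, μ[(Vr ⁻¹' {v}).indicator (fun _ => (1 : ℝ))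
        | MeasurableSpace.comap X inferInstance] =ᵐ[μ] fun ω => pi v (X ω))
    -- weak conditional exchangeability: Y^{tv} ⫫ V | X for each v
    (hexch : ∀ v, CondIndepFun (MeasurableSpace.comap X inferInstance) hX.comap_le
        (Ypo v) Vr μ)
    -- the compound-treatment outcome: Y^{(t)} = Y^{t, V}
    (Yt : Ω → ℝ) (hYt : ∀ ω, Yt ω = Ypo (Vr ω) ω)
    (hYtint : Integrable Yt μ) :
    ∫ ω, Yt ω ∂μ
      = ∫ ω, ∑ v, pi v (X ω)
          * (condExp (MeasurableSpace.comap X inferInstance) μ (Ypo v) ω) ∂μ := by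
  have hTmeas : ∀ v : V, MeasurableSet (Vr ⁻¹' {v}) :=
    fun v => hVr (measurableSet_singleton v)
  have hindint : ∀ v : V, Integrable ((Vr ⁻¹' {v}).indicator (Ypo v)) μ :=
    fun v => (hint v).indicator (hTmeas v)
  set m := MeasurableSpace.comap X inferInstance with hm_def
  have hm : m ≤ mΩ := hX.comap_le
  -- key step: per-version conditional factorization
  have hkey : ∀ v : V, condExp m μ ((Vr ⁻¹' {v}).indicator (Ypo v))
      =ᵐ[μ] fun ω => pi v (X ω) * condExp m μ (Ypo v) ω := by
    intro v
    have h3 : ∀ᵐ ω ∂μ, ∀ q : ℚ,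
        condExpKernel (mΩ := mΩ) μ m ω (Ypo v ⁻¹' Set.Iic (q : ℝ) ∩ Vr ⁻¹' {v})
          = condExpKernel (mΩ := mΩ) μ m ω (Ypo v ⁻¹' Set.Iic (q : ℝ)) * condExpKernel (mΩ := mΩ) μ m ω (Vr ⁻¹' {v}) := by
      rw [ae_all_iff]
      intro q
      exact ae_of_ae_trim hm
        ((Kernel.indepFun_iff_measure_inter_preimage_eq_mul.mp (hexch v))
          (Set.Iic (q : ℝ)) {v} measurableSet_Iic (measurableSet_singleton v))
    have h2 : ∀ᵐ ω ∂μ, Integrable (Ypo v) (condExpKernel (mΩ := mΩ) μ m ω) :=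
      Integrable.condExpKernel_ae (m := m) (mΩ := mΩ) (hint v)
    have hA : condExp m μ ((Vr ⁻¹' {v}).indicator (Ypo v))
        =ᵐ[μ] fun ω => ∫ y, (Vr ⁻¹' {v}).indicator (Ypo v) y ∂condExpKernel (mΩ := mΩ) μ m ω :=
      condExp_ae_eq_integral_condExpKernel (mΩ := mΩ) hm (hindint v)
    have hC : (fun ω => (condExpKernel (mΩ := mΩ) μ m ω (Vr ⁻¹' {v})).toReal) =ᵐ[μ] fun ω => pi v (X ω) :=
      (condExpKernel_ae_eq_condExp (mΩ := mΩ) hm (hTmeas v)).trans (hgate v)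
    have hD : condExp m μ (Ypo v) =ᵐ[μ] fun ω => ∫ y, Ypo v y ∂condExpKernel (mΩ := mΩ) μ m ω :=
      condExp_ae_eq_integral_condExpKernel (mΩ := mΩ) hm (hint v)
    filter_upwards [hA, h3, h2, hC, hD] with ω ha h3ω h2ω hcω hdω
    rw [ha, hdω, ← hcω]
    exact @setIntegral_eq_measure_mul_integral_of_rat Ω mΩ
      (condExpKernel (mΩ := mΩ) μ m ω) _ _ (hYpo v) _ (hTmeas v) h3ω
  -- decompose Yt
  have hYtsum : ∀ ω, Yt ω = ∑ v, (Vr ⁻¹' {v}).indicator (Ypo v) ω := by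
    intro ω
    rw [hYt, Finset.sum_eq_single (Vr ω)]
    · exact (Set.indicator_of_mem (by simp : ω ∈ Vr ⁻¹' {Vr ω}) (Ypo (Vr ω))).symm
    · intro v _ hv
      exact Set.indicator_of_notMem (by simp [Ne.symm hv]) _
    · intro h; exact absurd (Finset.mem_univ _) h
  calc ∫ ω, Yt ω ∂μ = ∫ ω, ∑ v, (Vr ⁻¹' {v}).indicator (Ypo v) ω ∂μ := by
        exact integral_congr_ae (Filter.Eventually.of_forall hYtsum)
    _ = ∑ v, ∫ ω, (Vr ⁻¹' {v}).indicator (Ypo v) ω ∂μ :=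
        integral_finset_sum _ fun v _ => hindint v
    _ = ∑ v, ∫ ω, condExp m μ ((Vr ⁻¹' {v}).indicator (Ypo v)) ω ∂μ := by
        refine Finset.sum_congr rfl fun v _ => ?_
        rw [integral_condExp hm]
    _ = ∑ v, ∫ ω, pi v (X ω) * condExp m μ (Ypo v) ω ∂μ :=
        Finset.sum_congr rfl fun v _ => integral_congr_ae (hkey v)
    _ = ∫ ω, ∑ v, pi v (X ω) * condExp m μ (Ypo v) ω ∂μ :=
        (integral_finset_sum _ fun v _ =>
          (integrable_condExp).congr (hkey v)).symm
end
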